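/- Let G = (g^{ab}) be a symmetric positive definite real 3×3 matrix. For all p, q ∈ ℝ³ one has s = h² + 4, the radicand defining h is nonnegative (i.e. g^{ab}(p_a−q_a)(p_b−q_b) ≥ (p⁰−q⁰)²), and the inequalities h ≤ √s ≤ 2√(p⁰ q⁰) hold. -/

import Mathlib

open Matrix Real

noncomputable section

/-- 3×3 real matrices. -/
abbrev Mat3 := Matrix (Fin 3) (Fin 3) ℝ
/-- Momentum vectors in ℝ³. -/
abbrev V3 := Fin 3 → ℝ

/-- The quadratic form `g^{ab} p_a p_b = pᵀ G p`. -/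
def quadG (G : Mat3) (p : V3) : ℝ := p ⬝ᵥ G *ᵥ p

/-- The particle energy `p⁰ = √(1 + g^{ab} p_a p_b)`. -/
def p0 (G : Mat3) (p : V3) : ℝ := Real.sqrt (1 + quadG G p)

/-- The relative momentum `h = √(−(p⁰−q⁰)² + g^{ab}(p_a−q_a)(p_b−q_b))`. -/
def hrel (G : Mat3) (p q : V3) : ℝ :=
  Real.sqrt (-(p0 G p - p0 G q) ^ 2 + quadG G (p - q))

/-- The square of the energy in the center of momentum system,
`s = (p⁰+q⁰)² − g^{ab}(p_a+q_a)(p_b+q_b)`. -/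
def sCM (G : Mat3) (p q : V3) : ℝ :=
  (p0 G p + p0 G q) ^ 2 - quadG G (p + q)

def bilG (G : Mat3) (p q : V3) : ℝ := p ⬝ᵥ G *ᵥ q

lemma bilG_symm (G : Mat3) (hG : G.PosDef) (p q : V3) : bilG G p q = bilG G q p := by
  unfold bilG
  have hsym : Gᵀ = G := by simpa using hG.isHermitian.eq
  rw [dotProduct_mulVec, ← mulVec_transpose, hsym, dotProduct_comm]

lemma quad_add (G : Mat3) (hG : G.PosDef) (p q : V3) :
    quadG G (p + q) = quadG G p + 2 * bilG G p q + quadG G q := by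
  have h := bilG_symm G hG q p
  simp only [quadG, bilG, mulVec_add, dotProduct_add, add_dotProduct] at *
  linarith

lemma quad_sub (G : Mat3) (hG : G.PosDef) (p q : V3) :
    quadG G (p - q) = quadG G p - 2 * bilG G p q + quadG G q := by
  have h := bilG_symm G hG q p
  simp only [quadG, bilG, mulVec_sub, dotProduct_sub, sub_dotProduct] at *
  linarith

lemma quad_nonneg (G : Mat3) (hG : G.PosDef) (p : V3) : 0 ≤ quadG G p := by
  simpa [quadG] using hG.posSemidef.dotProduct_mulVec_nonneg p

lemma bilG_smul (G : Mat3) (c d : ℝ) (p q : V3) :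
    bilG G (c • p) (d • q) = c * d * bilG G p q := by
  simp [bilG, mulVec_smul, smul_dotProduct, dotProduct_smul]; ring

lemma cauchy (G : Mat3) (hG : G.PosDef) (p q : V3) :
    bilG G p q ^ 2 ≤ quadG G p * quadG G q := by
  by_cases hq : q = 0
  · simp [hq, bilG, quadG]
  · have hb : 0 < quadG G q := by simpa [quadG] using hG.dotProduct_mulVec_pos hq
    have h0 : 0 ≤ quadG G (quadG G q • p - bilG G p q • q) := quad_nonneg G hG _
    rw [quad_sub G hG] at h0
    have e1 : quadG G (quadG G q • p) = quadG G q ^ 2 * quadG G p := by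
      have := bilG_smul G (quadG G q) (quadG G q) p p
      simp only [quadG, bilG] at *; linarith [this]
    have e2 : quadG G (bilG G p q • q) = bilG G p q ^ 2 * quadG G q := by
      have := bilG_smul G (bilG G p q) (bilG G p q) q q
      simp only [quadG, bilG] at *; linarith [this]
    have e3 : bilG G (quadG G q • p) (bilG G p q • q) = quadG G q * bilG G p q * bilG G p q :=
      bilG_smul G _ _ p q
    rw [e1, e2, e3] at h0
    nlinarith [hb, h0]


/-- for a symmetric positive definite `G` and all `p, q ∈ ℝ³`,
`s = h² + 4`, the radicand defining `h` is nonnegative, and `h ≤ √s ≤ 2√(p⁰q⁰)`. -/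
theorem stmt0 (G : Mat3) (hG : G.PosDef) (p q : V3) :
    sCM G p q = hrel G p q ^ 2 + 4 ∧
    (p0 G p - p0 G q) ^ 2 ≤ quadG G (p - q) ∧
    hrel G p q ≤ Real.sqrt (sCM G p q) ∧
    Real.sqrt (sCM G p q) ≤ 2 * Real.sqrt (p0 G p * p0 G q) := by
  set a := quadG G p with ha'
  set b := quadG G q with hb'
  set B := bilG G p q with hB'
  have ha : 0 ≤ a := quad_nonneg G hG p
  have hb : 0 ≤ b := quad_nonneg G hG q
  have hCS : B ^ 2 ≤ a * b := cauchy G hG p q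
  have hsub : quadG G (p - q) = a - 2 * B + b := quad_sub G hG p q
  have hadd : quadG G (p + q) = a + 2 * B + b := quad_add G hG p q
  have hsubn : 0 ≤ a - 2 * B + b := hsub ▸ quad_nonneg G hG (p - q)
  have haddn : 0 ≤ a + 2 * B + b := hadd ▸ quad_nonneg G hG (p + q)
  set P := p0 G p with hP'
  set Q := p0 G q with hQ'
  have hP0 : 0 ≤ P := Real.sqrt_nonneg _
  have hQ0 : 0 ≤ Q := Real.sqrt_nonneg _
  have hP2 : P ^ 2 = 1 + a := Real.sq_sqrt (by linarith)
  have hQ2 : Q ^ 2 = 1 + b := Real.sq_sqrt (by linarith)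
  -- key: P*Q ≥ 1 + B and P*Q ≥ 1 - B
  have hsq : (P * Q) ^ 2 = (1 + a) * (1 + b) := by rw [mul_pow, hP2, hQ2]
  have hPQ0 : 0 ≤ P * Q := mul_nonneg hP0 hQ0
  have key1 : 1 + B ≤ P * Q := by
    rcases le_or_gt (1 + B) 0 with h | h
    · linarith
    · nlinarith [hsq, hCS, hsubn]
  have key2 : 1 - B ≤ P * Q := by
    rcases le_or_gt (1 - B) 0 with h | h
    · linarith
    · nlinarith [hsq, hCS, haddn]
  -- radicand
  have hrad : -(P - Q) ^ 2 + quadG G (p - q) = 2 * (P * Q - 1 - B) := by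
    rw [hsub]; nlinarith [hP2, hQ2]
  have hradn : 0 ≤ -(P - Q) ^ 2 + quadG G (p - q) := by rw [hrad]; linarith
  have hstmt2 : (P - Q) ^ 2 ≤ quadG G (p - q) := by linarith
  have hh2 : hrel G p q ^ 2 = 2 * (P * Q - 1 - B) := by
    rw [hrel, Real.sq_sqrt hradn, hrad]
  have hs : sCM G p q = 2 * (P * Q - 1 - B) + 4 := by
    rw [sCM, hadd]; nlinarith [hP2, hQ2]
  refine ⟨by rw [hs, hh2], hstmt2, ?_, ?_⟩
  · have h1 : hrel G p q ^ 2 ≤ sCM G p q := by rw [hh2, hs]; linarith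
    have hhn : 0 ≤ hrel G p q := Real.sqrt_nonneg _
    calc hrel G p q = Real.sqrt (hrel G p q ^ 2) := (Real.sqrt_sq hhn).symm
      _ ≤ Real.sqrt (sCM G p q) := Real.sqrt_le_sqrt h1
  · have h2 : sCM G p q ≤ 4 * (P * Q) := by rw [hs]; linarith
    calc Real.sqrt (sCM G p q) ≤ Real.sqrt (4 * (P * Q)) := Real.sqrt_le_sqrt h2
      _ = 2 * Real.sqrt (P * Q) := by
          rw [show (4 : ℝ) * (P * Q) = 2 ^ 2 * (P * Q) by ring,
            Real.sqrt_mul (by positivity), Real.sqrt_sq (by norm_num)]
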